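/- Let H be a closed subgroup of U(n) and a ∈ L^∞(𝔹^n). For every λ > -1 the following are equivalent: (1) a is H-invariant, i.e. a ∘ A = a for every A ∈ H; (2) the Toeplitz operator T_a^{(λ)} intertwines the restriction π_λ|_H, i.e. T_a^{(λ)} π_λ(A) = π_λ(A) T_a^{(λ)} for every A ∈ H. -/

import Mathlib

open MeasureTheory Metric Complex
open scoped ENNReal ComplexConjugate TensorProduct

set_option maxHeartbeats 1000000
set_option synthInstance.maxHeartbeats 1000000
set_option linter.unusedSectionVars false

noncomputable section

namespace Bergman

variable (ι : Type*) [Fintype ι] [DecidableEq ι]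

/-- The complex Euclidean space with coordinates indexed by `ι`. -/
abbrev EC := EuclideanSpace ℂ ι

instance : MeasurableSpace (EC ι) := WithLp.measurableSpace 2 (ι → ℂ)
instance : BorelSpace (EC ι) := PiLp.borelSpace 2

/-- The open unit ball `𝔹 ⊆ ℂ^ι`. -/
abbrev UB : Set (EC ι) := Metric.ball (0 : EC ι) 1

/-- The normalizing constant `c_λ = Γ(n+λ+1)/(π^n Γ(λ+1))`. -/
def normConst (lam : ℝ) : ℝ :=
  Real.Gamma ((Fintype.card ι : ℝ) + lam + 1) /
    (Real.pi ^ (Fintype.card ι) * Real.Gamma (lam + 1))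

/-- The density `c_λ (1 - |z|²)^λ` of the weighted measure. -/
def wdens (lam : ℝ) (z : EC ι) : ℝ≥0∞ :=
  ENNReal.ofReal (normConst ι lam * (1 - ‖z‖ ^ 2) ^ lam)

/-- The weighted measure `v_λ` on the unit ball. -/
def mu (lam : ℝ) : Measure (EC ι) :=
  (volume.restrict (UB ι)).withDensity (wdens ι lam)

/-- The subspace of `L²(𝔹, v_λ)` of elements admitting a holomorphic representative. -/
def holo (lam : ℝ) : Submodule ℂ (Lp ℂ 2 (mu ι lam)) where
  carrier := {f | ∃ g : EC ι → ℂ, DifferentiableOn ℂ g (UB ι) ∧ (f : EC ι → ℂ) =ᵐ[mu ι lam] g}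
  zero_mem' := ⟨0, differentiableOn_const 0, Lp.coeFn_zero ℂ 2 (mu ι lam)⟩
  add_mem' := by
    rintro f₁ f₂ ⟨g₁, hg₁, he₁⟩ ⟨g₂, hg₂, he₂⟩
    exact ⟨g₁ + g₂, hg₁.add hg₂,
      (Lp.coeFn_add f₁ f₂).trans ((he₁.add he₂) : _)⟩
  smul_mem' := by
    rintro c f ⟨g, hg, he⟩
    exact ⟨c • g, hg.const_smul c,
      (Lp.coeFn_smul c f).trans (he.const_smul c)⟩

/-- The weighted Bergman space `A²_λ(𝔹)` (as the closed subspace of `L²(𝔹, v_λ)` of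
holomorphic elements; we take the topological closure to record closedness). -/
def A2 (lam : ℝ) : Submodule ℂ (Lp ℂ 2 (mu ι lam)) :=
  (holo ι lam).topologicalClosure

instance (lam : ℝ) : CompleteSpace (A2 ι lam) :=
  (holo ι lam).isClosed_topologicalClosure.completeSpace_coe

/-- The Bergman orthogonal projection `B_λ : L²(𝔹, v_λ) → A²_λ(𝔹)`. -/
def bProj (lam : ℝ) : Lp ℂ 2 (mu ι lam) →L[ℂ] A2 ι lam :=
  (A2 ι lam).orthogonalProjectionOnto

end Bergman
namespace Bergman
variable {ι : Type*} [Fintype ι] [DecidableEq ι]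

/-- Multiplication by an essentially bounded symbol, as a linear map on `L²`. -/
def mulSymbLin {lam : ℝ} {a : EC ι → ℂ} (ha : MemLp a ⊤ (mu ι lam)) :
    Lp ℂ 2 (mu ι lam) →ₗ[ℂ] Lp ℂ 2 (mu ι lam) where
  toFun f := ((Lp.memLp f).smul ha).toLp (a • (f : EC ι → ℂ))
  map_add' f g := by
    rw [← MemLp.toLp_add]
    refine MemLp.toLp_congr _ _ ?_
    filter_upwards [Lp.coeFn_add f g] with x hx
    simp only [Pi.smul_apply', Pi.add_apply, hx, smul_add]
  map_smul' c f := by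
    simp only [RingHom.id_apply]
    rw [← MemLp.toLp_const_smul c (((Lp.memLp f).smul ha))]
    refine MemLp.toLp_congr ((Lp.memLp (c • f)).smul ha) _ ?_
    filter_upwards [Lp.coeFn_smul c f] with x hx
    simp only [Pi.smul_apply', Pi.smul_apply, Pi.mul_apply, hx, smul_eq_mul]
    ring

lemma mulSymbLin_bound {lam : ℝ} {a : EC ι → ℂ} (ha : MemLp a ⊤ (mu ι lam))
    (f : Lp ℂ 2 (mu ι lam)) :
    ‖mulSymbLin ha f‖ ≤ (eLpNorm a ⊤ (mu ι lam)).toReal * ‖f‖ := by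
  rw [Lp.norm_def, Lp.norm_def]
  have h1 : eLpNorm (mulSymbLin ha f : EC ι → ℂ) 2 (mu ι lam)
      = eLpNorm (a • (f : EC ι → ℂ)) 2 (mu ι lam) :=
    eLpNorm_congr_ae (((Lp.memLp f).smul ha).coeFn_toLp)
  rw [h1, ← ENNReal.toReal_mul]
  refine ENNReal.toReal_mono ?_ ?_
  · exact ENNReal.mul_ne_top ha.eLpNorm_ne_top (Lp.memLp f).eLpNorm_ne_top
  · exact eLpNorm_smul_le_mul_eLpNorm (Lp.aestronglyMeasurable f) ha.aestronglyMeasurable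

/-- Multiplication by an essentially bounded symbol, as a bounded operator on `L²`. -/
def mulSymb {lam : ℝ} {a : EC ι → ℂ} (ha : MemLp a ⊤ (mu ι lam)) :
    Lp ℂ 2 (mu ι lam) →L[ℂ] Lp ℂ 2 (mu ι lam) :=
  LinearMap.mkContinuous (mulSymbLin ha) ((eLpNorm a ⊤ (mu ι lam)).toReal)
    (mulSymbLin_bound ha)

/-- The Toeplitz operator `T_a^{(λ)} = B_λ (a ·)` on the weighted Bergman space. -/
def toeplitz {lam : ℝ} {a : EC ι → ℂ} (ha : MemLp a ⊤ (mu ι lam)) :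
    A2 ι lam →L[ℂ] A2 ι lam :=
  (bProj ι lam).comp ((mulSymb ha).comp (A2 ι lam).subtypeL)

end Bergman
namespace Bergman
variable {ι : Type*} [Fintype ι] [DecidableEq ι]

/-- The unitary group `U(n)` (for coordinates indexed by `ι`). -/
abbrev UG (ι : Type*) [Fintype ι] [DecidableEq ι] := Matrix.unitaryGroup ι ℂ

instance : MeasurableSpace (Matrix ι ι ℂ) :=
  inferInstanceAs (MeasurableSpace (ι → ι → ℂ))

instance : MeasurableSpace (UG ι) := Subtype.instMeasurableSpace

/-- The linear isometry of `ℂ^ι` induced by a unitary matrix. -/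
def uIso (A : UG ι) : EC ι ≃ₗᵢ[ℂ] EC ι :=
  Unitary.linearIsometryEquiv
    (Unitary.map (StarMonoidHom.ofClass (Matrix.toEuclideanCLM (𝕜 := ℂ) (n := ι))) A)

/-- The same map as a real-linear isometry. -/
def uIsoR (A : UG ι) : EC ι ≃ₗᵢ[ℝ] EC ι where
  toLinearEquiv := (uIso A).toLinearEquiv.restrictScalars ℝ
  norm_map' := (uIso A).norm_map

lemma uIso_measurable (A : UG ι) : Measurable (uIso A) :=
  (uIso A).continuous.measurable

lemma measurable_rpow_const (lam : ℝ) : Measurable (fun x : ℝ => x ^ lam) :=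
  measurable_of_continuousOn_compl_singleton 0
    (fun x hx => (Real.continuousAt_rpow_const x lam (.inl hx)).continuousWithinAt)

lemma wdens_measurable (lam : ℝ) : Measurable (wdens ι lam) := by
  apply ENNReal.measurable_ofReal.comp
  apply Measurable.const_mul
  exact (measurable_rpow_const lam).comp
    (measurable_const.sub (measurable_norm.pow_const 2))

lemma uIso_preimage_ball (A : UG ι) : (uIso A) ⁻¹' (UB ι) = UB ι := by
  ext z
  simp only [Set.mem_preimage, UB, mem_ball_zero_iff, (uIso A).norm_map]

lemma uIso_wdens (lam : ℝ) (A : UG ι) : wdens ι lam ∘ (uIso A) = wdens ι lam := by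
  funext z
  simp only [Function.comp_apply, wdens, (uIso A).norm_map]

/-- Auxiliary: a measure preserving map transports a `withDensity` measure. -/
lemma mp_withDensity {α β : Type*} [MeasurableSpace α] [MeasurableSpace β]
    {f : α → β} {μ : Measure α} {ν : Measure β} (hf : MeasurePreserving f μ ν)
    {w : β → ℝ≥0∞} (hw : Measurable w) :
    MeasurePreserving f (μ.withDensity (w ∘ f)) (ν.withDensity w) := by
  refine ⟨hf.measurable, ?_⟩
  ext s hs
  rw [Measure.map_apply hf.measurable hs, withDensity_apply _ (hf.measurable hs),
    withDensity_apply _ hs, ← hf.setLIntegral_comp_preimage hs hw]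
  rfl

/-- Unitary transformations preserve the weighted measure `v_λ`. -/
lemma uIso_measurePreserving (lam : ℝ) (A : UG ι) :
    MeasurePreserving (uIso A) (mu ι lam) (mu ι lam) := by
  have hvol : MeasurePreserving (uIso A) volume volume :=
    (uIsoR A).measurePreserving
  have hres : MeasurePreserving (uIso A) (volume.restrict (UB ι)) (volume.restrict (UB ι)) := by
    have := hvol.restrict_preimage (s := UB ι) measurableSet_ball
    rwa [uIso_preimage_ball] at this
  have := mp_withDensity hres (wdens_measurable lam)
  rwa [uIso_wdens] at this

/-- The unitary representation `π_λ` of `U(n)` on `L²(𝔹, v_λ)`; `π_λ(A) f = f ∘ A⁻¹`. -/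
def piL2 (lam : ℝ) (A : UG ι) : Lp ℂ 2 (mu ι lam) →ₗᵢ[ℂ] Lp ℂ 2 (mu ι lam) :=
  Lp.compMeasurePreservingₗᵢ ℂ (⇑(uIso (A⁻¹))) (uIso_measurePreserving lam A⁻¹)

lemma uIso_mapsTo_ball (A : UG ι) : Set.MapsTo (uIso A) (UB ι) (UB ι) := by
  intro z hz
  have : z ∈ (uIso A) ⁻¹' (UB ι) := by rw [uIso_preimage_ball]; exact hz
  exact this

lemma piL2_mem_A2 (lam : ℝ) (A : UG ι) {f : Lp ℂ 2 (mu ι lam)} (hf : f ∈ A2 ι lam) :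
    piL2 lam A f ∈ A2 ι lam := by
  classical
  -- first, the holomorphic subspace is preserved
  have key : ∀ g ∈ holo ι lam, piL2 lam A g ∈ holo ι lam := by
    rintro g ⟨G, hG, hge⟩
    refine ⟨G ∘ (uIso (A⁻¹)), ?_, ?_⟩
    · exact hG.comp ((uIso (A⁻¹)).toContinuousLinearEquiv.differentiable.differentiableOn)
        (uIso_mapsTo_ball _)
    · have h1 : (piL2 lam A g : EC ι → ℂ) =ᵐ[mu ι lam] (g : EC ι → ℂ) ∘ (uIso (A⁻¹)) :=
        Lp.coeFn_compMeasurePreserving g (uIso_measurePreserving lam A⁻¹)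
      refine h1.trans ?_
      exact (uIso_measurePreserving lam A⁻¹).quasiMeasurePreserving.ae_eq_comp hge
  -- now pass to the closure
  have hcont : Continuous (piL2 lam A) := (piL2 lam A).continuous
  have hsub : (piL2 lam A) '' (holo ι lam : Set (Lp ℂ 2 (mu ι lam))) ⊆ (holo ι lam : Set _) :=
    fun x ⟨g, hg, hxg⟩ => hxg ▸ key g hg
  have hfc : f ∈ closure (holo ι lam : Set (Lp ℂ 2 (mu ι lam))) := hf
  have : piL2 lam A f ∈ closure ((piL2 lam A) '' (holo ι lam : Set _)) :=
    Set.mem_of_mem_of_subset (Set.mem_image_of_mem _ hfc)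
      (image_closure_subset_closure_image hcont)
  exact closure_mono hsub this

/-- The unitary representation `π_λ` of `U(n)` on the Bergman space `A²_λ(𝔹)`. -/
def piA2 (lam : ℝ) (A : UG ι) : A2 ι lam →L[ℂ] A2 ι lam :=
  ContinuousLinearMap.codRestrict
    (((piL2 lam A).toContinuousLinearMap).comp (A2 ι lam).subtypeL)
    (A2 ι lam) (fun f => piL2_mem_A2 lam A f.2)

end Bergman
namespace Bergman
variable {ι : Type*} [Fintype ι] [DecidableEq ι]

lemma coe_unitary_inv (A : UG ι) : ((A⁻¹ : UG ι) : Matrix ι ι ℂ) = star (A : Matrix ι ι ℂ) := by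
  rw [← Unitary.star_eq_inv]
  rfl

section Subgroups

variable {J : Type*} [Fintype J] [DecidableEq J]

/-- The block-diagonal subgroup `U(k) = U(k₁) × ⋯ × U(k_m)` of `U(n)` determined by the
block assignment `b : ι → J` of the coordinates. -/
def blockSubgroup (b : ι → J) : Subgroup (UG ι) where
  carrier := {A | ∀ p q : ι, b p ≠ b q → (A : Matrix ι ι ℂ) p q = 0}
  one_mem' := by
    intro p q hpq
    exact Matrix.one_apply_ne (fun h => hpq (by rw [h]))
  mul_mem' := by
    intro A B hA hB p q hpq
    show ∑ r, (A : Matrix ι ι ℂ) p r * (B : Matrix ι ι ℂ) r q = 0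
    refine Finset.sum_eq_zero fun r _ => ?_
    by_cases h : b p = b r
    · rw [hB r q (h ▸ hpq), mul_zero]
    · rw [hA p r h, zero_mul]
  inv_mem' := by
    intro A hA p q hpq
    rw [coe_unitary_inv]
    show star ((A : Matrix ι ι ℂ) q p) = 0
    rw [hA q p (Ne.symm hpq), star_zero]

/-- The subgroup `𝕋^m` of `U(n)`: the center of `U(k)`, consisting of the unitary matrices
acting by a scalar on each block. -/
def torusSubgroup (b : ι → J) : Subgroup (UG ι) where
  carrier := {A | ∃ t : J → ℂ, (A : Matrix ι ι ℂ) = Matrix.diagonal fun p => t (b p)}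
  one_mem' := ⟨fun _ => 1, by simp [Matrix.diagonal_one]⟩
  mul_mem' := by
    rintro A B ⟨t, ht⟩ ⟨s, hs⟩
    refine ⟨t * s, ?_⟩
    show (A : Matrix ι ι ℂ) * (B : Matrix ι ι ℂ) = _
    rw [ht, hs, Matrix.diagonal_mul_diagonal]
    rfl
  inv_mem' := by
    rintro A ⟨t, ht⟩
    refine ⟨fun j => starRingEnd ℂ (t j), ?_⟩
    rw [coe_unitary_inv, ht]
    show Matrix.conjTranspose (Matrix.diagonal fun p => t (b p)) = _
    rw [Matrix.diagonal_conjTranspose]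
    rfl

/-- The subgroup `U(k, j₀, 𝕋)` of `U(k)`, obtained by replacing the factor `U(k_{j₀})` by its
center `𝕋`. -/
def UkjT (b : ι → J) (j₀ : J) : Subgroup (UG ι) where
  carrier := {A | A ∈ blockSubgroup b ∧
    ∃ c : ℂ, ∀ p q : ι, b p = j₀ → (A : Matrix ι ι ℂ) p q = if p = q then c else 0}
  one_mem' := by
    refine ⟨(blockSubgroup b).one_mem, 1, fun p q _ => ?_⟩
    show (1 : Matrix ι ι ℂ) p q = _
    rw [Matrix.one_apply]
  mul_mem' := by
    rintro A B ⟨hAb, cA, hA⟩ ⟨hBb, cB, hB⟩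
    refine ⟨(blockSubgroup b).mul_mem hAb hBb, cA * cB, fun p q hp => ?_⟩
    show ∑ r, (A : Matrix ι ι ℂ) p r * (B : Matrix ι ι ℂ) r q = _
    rw [Finset.sum_eq_single p]
    · rw [hA p p hp, if_pos rfl]
      by_cases hq : p = q
      · rw [← hq, hB p p hp, if_pos rfl, if_pos rfl]
      · rw [hB p q hp, if_neg hq, if_neg hq, mul_zero]
    · intro r _ hr
      rw [hA p r hp, if_neg (fun h => hr h.symm), zero_mul]
    · intro h
      exact absurd (Finset.mem_univ p) h
  inv_mem' := by
    rintro A ⟨hAb, c, hA⟩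
    refine ⟨(blockSubgroup b).inv_mem hAb, starRingEnd ℂ c, fun p q hp => ?_⟩
    rw [coe_unitary_inv]
    show star ((A : Matrix ι ι ℂ) q p) = _
    by_cases hq : b q = j₀
    · rw [hA q p hq]
      by_cases h : p = q
      · simp [h]
      · rw [if_neg (fun hh : q = p => h hh.symm), star_zero, if_neg h]
    · have : b q ≠ b p := fun h => hq (h.trans hp)
      rw [hAb q p this, star_zero]
      have hpq : p ≠ q := fun h => hq (h ▸ hp : b q = j₀)
      rw [if_neg hpq]

end Subgroups
end Bergman
namespace Bergman
variable {ι : Type*} [Fintype ι] [DecidableEq ι]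

section Polynomials
variable {J : Type*} [Fintype J] [DecidableEq J]

/-- Evaluation of a polynomial, as a function on `ℂ^ι`. -/
def polyFun (p : MvPolynomial ι ℂ) : EC ι → ℂ := fun z => MvPolynomial.eval (fun i => z i) p

/-- The space of polynomials that are homogeneous of degree `κ j` in the variables
of the block `j`, for every `j`. -/
def multiHomog (b : ι → J) (κ : J → ℕ) : Submodule ℂ (MvPolynomial ι ℂ) where
  carrier := {p | ∀ d ∈ p.support, ∀ j,
    ∑ i ∈ Finset.univ.filter (fun i => b i = j), d i = κ j}
  zero_mem' := by simp
  add_mem' := by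
    intro p q hp hq d hd j
    rcases Finset.mem_union.mp (MvPolynomial.support_add hd) with h | h
    exacts [hp d h j, hq d h j]
  smul_mem' := by
    intro c p hp d hd j
    exact hp d (MvPolynomial.support_smul hd) j

/-- The subspace `P_𝜿(ℂ^n)` of the Bergman space: elements admitting a representative
which is a polynomial, homogeneous of degree `κ j` in the block-`j` variables for every `j`.
(Taking the topological closure records that it is closed.) -/
def polPre (lam : ℝ) (b : ι → J) (κ : J → ℕ) : Submodule ℂ (A2 ι lam) where
  carrier := {f | ∃ p ∈ multiHomog b κ,
    ((f : Lp ℂ 2 (mu ι lam)) : EC ι → ℂ) =ᵐ[mu ι lam] polyFun p}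
  zero_mem' := by
    refine ⟨0, Submodule.zero_mem _, ?_⟩
    refine (Lp.coeFn_zero ℂ 2 (mu ι lam)).trans ?_
    refine Filter.EventuallyEq.of_eq (funext fun z => ?_)
    simp [polyFun]
  add_mem' := by
    rintro f g ⟨p, hp, hep⟩ ⟨q, hq, heq⟩
    refine ⟨p + q, Submodule.add_mem _ hp hq, ?_⟩
    refine (Lp.coeFn_add (f : Lp ℂ 2 (mu ι lam)) (g : Lp ℂ 2 (mu ι lam))).trans ?_
    filter_upwards [hep, heq] with z h1 h2
    simp [polyFun, Pi.add_apply, h1, h2]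
  smul_mem' := by
    rintro c f ⟨p, hp, hep⟩
    refine ⟨c • p, Submodule.smul_mem _ c hp, ?_⟩
    refine (Lp.coeFn_smul c (f : Lp ℂ 2 (mu ι lam))).trans ?_
    filter_upwards [hep] with z h1
    simp [polyFun, Pi.smul_apply, h1, MvPolynomial.smul_eq_C_mul]

/-- The subspace `P_𝜿(ℂ^n)` of the Bergman space. -/
def Pol (lam : ℝ) (b : ι → J) (κ : J → ℕ) : Submodule ℂ (A2 ι lam) :=
  (polPre lam b κ).topologicalClosure

instance (lam : ℝ) (b : ι → J) (κ : J → ℕ) : CompleteSpace (Pol lam b κ) :=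
  (polPre lam b κ).isClosed_topologicalClosure.completeSpace_coe

end Polynomials

section Shortcuts

instance A2innerProductSpace (lam : ℝ) : InnerProductSpace ℂ (A2 ι lam) := inferInstance
instance A2NormedSpace (lam : ℝ) : NormedSpace ℂ (A2 ι lam) := inferInstance
instance A2StarRing (lam : ℝ) : StarRing (A2 ι lam →L[ℂ] A2 ι lam) := inferInstance
instance A2StarModule (lam : ℝ) : StarModule ℂ (A2 ι lam →L[ℂ] A2 ι lam) := inferInstance
instance A2SemitopSemiring (lam : ℝ) : IsSemitopologicalSemiring (A2 ι lam →L[ℂ] A2 ι lam) := by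
  have := NonUnitalSeminormedRing.toIsTopologicalRing (α := A2 ι lam →L[ℂ] A2 ι lam)
  infer_instance
instance A2ContStar (lam : ℝ) : ContinuousStar (A2 ι lam →L[ℂ] A2 ι lam) :=
  ⟨(ContinuousLinearMap.adjoint (𝕜 := ℂ) (E := A2 ι lam) (F := A2 ι lam)).continuous⟩

end Shortcuts

section Operators
variable {J : Type*} [Fintype J] [DecidableEq J]

/-- A symbol `a` is invariant under a set `S` of unitary matrices if `a ∘ A = a`
(almost everywhere) for every `A ∈ S`. -/
def invariantUnder (lam : ℝ) (S : Set (UG ι)) (a : EC ι → ℂ) : Prop :=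
  ∀ A ∈ S, (fun z => a (uIso A z)) =ᵐ[mu ι lam] a

/-- The algebra `End_H(A²_λ)` of bounded operators intertwining `π_λ|_H`. -/
def EndAlg (lam : ℝ) (S : Set (UG ι)) : Subalgebra ℂ (A2 ι lam →L[ℂ] A2 ι lam) :=
  Subalgebra.centralizer ℂ ((fun A => piA2 lam A) '' S)

/-- The trace of the restriction (block) of an operator to an invariant subspace. -/
def traceOn {lam : ℝ} (p : Submodule ℂ (A2 ι lam)) (T : A2 ι lam →L[ℂ] A2 ι lam)
    (hT : ∀ f ∈ p, T f ∈ p) : ℂ :=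
  LinearMap.trace ℂ p ((T : A2 ι lam →ₗ[ℂ] A2 ι lam).restrict hT)

/-- The set of Toeplitz operators with essentially bounded `S`-invariant symbols. -/
def toepSet (lam : ℝ) (S : Set (UG ι)) : Set (A2 ι lam →L[ℂ] A2 ι lam) :=
  {T | ∃ (a : EC ι → ℂ) (ha : MemLp a ⊤ (mu ι lam)), invariantUnder lam S a ∧ T = toeplitz ha}


/-- The C*-algebra generated by the Toeplitz operators with `S`-invariant symbols. -/
def toepCstar (lam : ℝ) (S : Set (UG ι)) : StarSubalgebra ℂ (A2 ι lam →L[ℂ] A2 ι lam) :=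
  (StarAlgebra.adjoin ℂ (toepSet lam S)).topologicalClosure

end Operators

section Coordinates
variable {J : Type*} [Fintype J] [DecidableEq J]

/-- The monomial `z^α`, as a function on `ℂ^ι`. -/
def monFun (α : ι → ℕ) : EC ι → ℂ := fun z => ∏ i, z i ^ α i

/-- A polynomial in the variables of the block `j₀`, as a function on `ℂ^ι`. -/
def blockPolyFun {b : ι → J} {j₀ : J} (p : MvPolynomial {i // b i = j₀} ℂ) : EC ι → ℂ :=
  fun z => MvPolynomial.eval (fun s => z s.1) p

/-- The block component `z_(j)` of `z ∈ ℂ^ι`. -/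
def blockPart (b : ι → J) (j : J) (z : EC ι) : EuclideanSpace ℂ {i // b i = j} :=
  (EuclideanSpace.equiv {i // b i = j} ℂ).symm (fun s => z s.1)

/-- Assembling a point of `ℂ^ι` from radial block parameters and unit block vectors,
`z = (r₁ u₁, …, r_m u_m)`. -/
def assemble (b : ι → J) (r : J → ℝ) (u : ∀ j, EuclideanSpace ℂ {i // b i = j}) : EC ι :=
  (EuclideanSpace.equiv ι ℂ).symm (fun i => (r (b i) : ℂ) * u (b i) ⟨i, rfl⟩)

/-- The "radial simplex" `τ(𝔹^m) = {r ∈ ℝ^m₊ : |r| < 1}`. -/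
def tauSet (J : Type*) [Fintype J] : Set (J → ℝ) :=
  {r | (∀ j, 0 < r j) ∧ ∑ j, (r j) ^ 2 < 1}

end Coordinates
end Bergman
namespace Bergman
variable {ι : Type*} [Fintype ι] [DecidableEq ι]

section PolyAction
variable {σ : Type*} [Fintype σ]

/-- The substitution action of a matrix on polynomials: `(mpolyAct M p)(z) = p(Mz)`. -/
def mpolyAct (M : Matrix σ σ ℂ) (p : MvPolynomial σ ℂ) : MvPolynomial σ ℂ :=
  MvPolynomial.aeval (fun i => ∑ i', MvPolynomial.C (M i i') * MvPolynomial.X i') p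

lemma mpolyAct_isHomogeneous (M : Matrix σ σ ℂ) {p : MvPolynomial σ ℂ} {n : ℕ}
    (hp : p.IsHomogeneous n) : (mpolyAct M p).IsHomogeneous n := by
  have := hp.aeval (fun i => ∑ i', MvPolynomial.C (M i i') * MvPolynomial.X i')
    (fun i => MvPolynomial.IsHomogeneous.sum _ _ 1
      (fun i' _ => MvPolynomial.isHomogeneous_C_mul_X _ _))
  simpa [one_mul, mpolyAct] using this

end PolyAction

section Tensor
variable {J : Type*} [Fintype J] [DecidableEq J]

/-- The group action of `U(n)` on polynomial symbols: `(A · p)(z) = p(A⁻¹ z)`. -/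
def polyGroupAct (A : UG ι) (p : MvPolynomial ι ℂ) : MvPolynomial ι ℂ :=
  mpolyAct ((A⁻¹ : UG ι) : Matrix ι ι ℂ) p

/-- The diagonal block of a matrix corresponding to the block `j` of coordinates. -/
def matrixBlock (b : ι → J) (M : Matrix ι ι ℂ) (j : J) :
    Matrix {i // b i = j} {i // b i = j} ℂ :=
  fun s t => M s.1 t.1

/-- The action of an element of the block subgroup on the `j`-th tensor factor
(polynomials in the block-`j` variables). -/
def blockGroupAct (b : ι → J) (A : UG ι) (j : J) (p : MvPolynomial {i // b i = j} ℂ) :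
    MvPolynomial {i // b i = j} ℂ :=
  mpolyAct (matrixBlock b ((A⁻¹ : UG ι) : Matrix ι ι ℂ) j) p

/-- The space `P_κ(ℂ^{k_j})` of homogeneous polynomials of degree `κ j` in the
variables of the block `j`. -/
abbrev homogBlock (b : ι → J) (j : J) (κj : ℕ) : Submodule ℂ (MvPolynomial {i // b i = j} ℂ) :=
  MvPolynomial.homogeneousSubmodule {i // b i = j} ℂ κj

/-- The canonical map `U_𝜿 : ⊗_j P_{κ_j}(ℂ^{k_j}) → P_𝜿(ℂ^n)`,
sending `p₁ ⊗ ⋯ ⊗ p_m` to the product polynomial `z ↦ p₁(z_(1)) ⋯ p_m(z_(m))`. -/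
def Ukappa (b : ι → J) (κ : J → ℕ) :
    (⨂[ℂ] j : J, ↥(homogBlock b j (κ j))) →ₗ[ℂ] MvPolynomial ι ℂ :=
  PiTensorProduct.lift
    ((MultilinearMap.mkPiAlgebra ℂ J (MvPolynomial ι ℂ)).compLinearMap
      (fun j => (MvPolynomial.rename (Subtype.val : {i // b i = j} → ι)).toLinearMap.comp
        (homogBlock b j (κ j)).subtype))

end Tensor
end Bergman
namespace Bergman

section MeasureFacts
variable {ι : Type*} [Fintype ι] [DecidableEq ι]

lemma mu_ae_ball (lam : ℝ) : ∀ᵐ z ∂(mu ι lam), z ∈ UB ι := by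
  rw [ae_iff]
  have hset : {z : EC ι | ¬ z ∈ UB ι} = (UB ι)ᶜ := rfl
  rw [hset, mu, withDensity_apply _ measurableSet_ball.compl]
  have h0 : (volume.restrict (UB ι)) ((UB ι)ᶜ) = 0 := by
    rw [Measure.restrict_apply measurableSet_ball.compl, Set.compl_inter_self]
    exact measure_empty
  exact setLIntegral_measure_zero _ _ h0

lemma normConst_nonneg (lam : ℝ) (hlam : -1 < lam) : 0 ≤ normConst ι lam := by
  unfold normConst
  apply div_nonneg
  · refine (Real.Gamma_pos_of_pos ?_).le
    have hn : (0:ℝ) ≤ (Fintype.card ι : ℝ) := Nat.cast_nonneg _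
    linarith
  · have h1 : 0 < Real.Gamma (lam + 1) := Real.Gamma_pos_of_pos (by linarith)
    positivity

lemma pow_sub_pow_le_aux {x y : ℝ} (hy : 0 ≤ y) (hxy : y ≤ x) (hx : x ≤ 1) :
    ∀ d : ℕ, x ^ d - y ^ d ≤ d * (x - y) := by
  intro d; induction d with
  | zero => simp
  | succ n ih =>
    have hxn : x ^ n ≤ 1 := pow_le_one₀ (le_trans hy hxy) hx
    have hyn : 0 ≤ y ^ n := pow_nonneg hy n
    have hyn' : y ^ n ≤ x ^ n := pow_le_pow_left₀ hy hxy n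
    have hx0 : 0 ≤ x := le_trans hy hxy
    have h1 : x ^ (n+1) - y ^ (n+1) = x * (x ^ n - y ^ n) + (x - y) * y ^ n := by ring
    have h2 : x * (x ^ n - y ^ n) ≤ n * (x - y) := by nlinarith
    have h3 : (x - y) * y ^ n ≤ (x - y) * 1 := by nlinarith
    push_cast
    nlinarith

lemma mu_finite (lam : ℝ) (hlam : -1 < lam) : IsFiniteMeasure (mu ι lam) := by
  constructor
  have hmuK : mu ι lam Set.univ = ∫⁻ z, wdens ι lam z ∂(volume.restrict (UB ι)) := by
    rw [mu, withDensity_apply _ MeasurableSet.univ, setLIntegral_univ]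
  have hconst : 0 ≤ normConst ι lam := normConst_nonneg lam hlam
  have hb : volume (UB ι) < ⊤ := measure_ball_lt_top
  rw [hmuK]
  rcases le_or_gt 0 lam with h0 | h0
  · calc ∫⁻ z, wdens ι lam z ∂(volume.restrict (UB ι))
        ≤ ∫⁻ _, ENNReal.ofReal (normConst ι lam) ∂(volume.restrict (UB ι)) := by
          refine lintegral_mono_ae ?_
          filter_upwards [ae_restrict_mem measurableSet_ball] with z hz
          unfold wdens
          apply ENNReal.ofReal_le_ofReal
          have h1 : ‖z‖ < 1 := mem_ball_zero_iff.mp hz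
          have h2 : (1 - ‖z‖^2 : ℝ) ^ lam ≤ 1 :=
            Real.rpow_le_one (by nlinarith [norm_nonneg z]) (by nlinarith [norm_nonneg z]) h0
          nlinarith
      _ = ENNReal.ofReal (normConst ι lam) * volume (UB ι) := by
          rw [lintegral_const, Measure.restrict_apply_univ]
      _ < ⊤ := ENNReal.mul_lt_top ENNReal.ofReal_lt_top hb
  · -- -1 < lam < 0
    have hkey : ∫⁻ z in UB ι, ENNReal.ofReal ((1 - ‖z‖) ^ lam) ∂volume < ⊤ := by
      rcases isEmpty_or_nonempty ι with hι | hι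
      · have hz0 : ∀ z : EC ι, (1 - ‖z‖ : ℝ) ^ lam = 1 := by
          intro z
          have hz : z = 0 := Subsingleton.elim z 0
          simp [hz]
        calc ∫⁻ z in UB ι, ENNReal.ofReal ((1 - ‖z‖) ^ lam) ∂volume
            = ∫⁻ _ in UB ι, (1 : ℝ≥0∞) ∂volume := by
              apply lintegral_congr; intro z; rw [hz0 z]; simp
          _ = volume (UB ι) := by rw [setLIntegral_const, one_mul]
          _ < ⊤ := hb
      · haveI : Nontrivial (EC ι) := by
          obtain ⟨i⟩ := hι
          refine ⟨EuclideanSpace.single i (1:ℂ), 0, fun h => ?_⟩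
          have h2 := congrArg (fun v : EC ι => v i) h
          simp [EuclideanSpace.single_apply] at h2
        set d := Module.finrank ℝ (EC ι) with hd
        set B := volume (ball (0 : EC ι) 1) with hB
        have hBne : B ≠ ⊤ := hb.ne
        set r : ℕ → ℝ := fun k => 1 - (2:ℝ)⁻¹ ^ k with hr
        set D : ℕ → Set (EC ι) := fun k => ball (0:EC ι) (r (k+1)) \ ball 0 (r k) with hDdef
        have hhalf : ∀ k : ℕ, (0:ℝ) < (2:ℝ)⁻¹ ^ k := fun k => by positivity
        have hhalf1 : ∀ k : ℕ, (2:ℝ)⁻¹ ^ k ≤ 1 := fun k =>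
          pow_le_one₀ (by norm_num) (by norm_num)
        have hr0 : ∀ k, 0 ≤ r k := fun k => by
          simp only [hr]; linarith [hhalf1 k]
        have hr1 : ∀ k, r k ≤ 1 := fun k => by
          simp only [hr]; linarith [hhalf k]
        have hrmono : ∀ k, r k ≤ r (k + 1) := fun k => by
          simp only [hr, pow_succ]
          nlinarith [hhalf k]
        have hgap : ∀ k : ℕ, r (k+1) - r k = (2:ℝ)⁻¹ ^ (k+1) := fun k => by
          simp only [hr, pow_succ]; ring
        have hcover : UB ι ⊆ ⋃ k, D k := by
          intro z hz
          have h1 : ‖z‖ < 1 := mem_ball_zero_iff.mp hz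
          have hP : ∃ k : ℕ, ‖z‖ < r (k+1) := by
            obtain ⟨m, hm⟩ := exists_pow_lt_of_lt_one (x := 1 - ‖z‖) (by linarith)
              (by norm_num : (2:ℝ)⁻¹ < 1)
            refine ⟨m, ?_⟩
            have : (2:ℝ)⁻¹ ^ (m+1) ≤ (2:ℝ)⁻¹ ^ m := by
              apply pow_le_pow_of_le_one (by norm_num) (by norm_num)
              omega
            simp only [hr]; linarith
          classical
          refine Set.mem_iUnion.mpr ⟨Nat.find hP, ?_⟩
          constructor
          · exact mem_ball_zero_iff.mpr (Nat.find_spec hP)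
          · intro hmem
            have h2 : ‖z‖ < r (Nat.find hP) := mem_ball_zero_iff.mp hmem
            rcases Nat.eq_zero_or_eq_succ_pred (Nat.find hP) with h | h
            · rw [h] at h2
              simp only [hr, pow_zero] at h2
              linarith [norm_nonneg z]
            · have hlt : Nat.find hP - 1 < Nat.find hP := by omega
              have := Nat.find_min hP hlt
              rw [h] at h2
              exact this (by simpa using h2)
        have hvolD : ∀ k, volume (D k) ≤ ENNReal.ofReal (d * (2:ℝ)⁻¹ ^ (k+1)) * B := by
          intro k
          have hdiff : volume (D k) =
              volume (ball (0:EC ι) (r (k+1))) - volume (ball (0:EC ι) (r k)) := by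
            rw [hDdef]
            exact measure_diff (ball_subset_ball (hrmono k))
              measurableSet_ball.nullMeasurableSet measure_ball_lt_top.ne
          rw [hdiff, Measure.addHaar_ball volume _ (hr0 (k+1)),
            Measure.addHaar_ball volume _ (hr0 k)]
          rw [← hB, ← hd]
          have hnn : (0:ℝ) ≤ r k ^ d := pow_nonneg (hr0 k) d
          have hsub : r (k+1) ^ d - r k ^ d ≤ d * (2:ℝ)⁻¹ ^ (k+1) := by
            have := pow_sub_pow_le_aux (hr0 k) (hrmono k) (hr1 (k+1)) d
            rw [hgap k] at this
            exact this
          calc ENNReal.ofReal (r (k+1) ^ d) * B - ENNReal.ofReal (r k ^ d) * B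
              ≤ ENNReal.ofReal (r (k+1) ^ d - r k ^ d) * B := by
                rw [tsub_le_iff_right, ← add_mul, ← ENNReal.ofReal_add (sub_nonneg.mpr (pow_le_pow_left₀ (hr0 k) (hrmono k) d)) hnn]
                apply mul_le_mul_left
                apply ENNReal.ofReal_le_ofReal
                linarith
            _ ≤ ENNReal.ofReal (d * (2:ℝ)⁻¹ ^ (k+1)) * B := by
                exact mul_le_mul_left (ENNReal.ofReal_le_ofReal hsub) B
        have hDk : ∀ k, ∫⁻ z in D k, ENNReal.ofReal ((1-‖z‖) ^ lam) ∂volume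
            ≤ ENNReal.ofReal (((2:ℝ)⁻¹ ^ (k+1)) ^ lam) *
              (ENNReal.ofReal (d * (2:ℝ)⁻¹ ^ (k+1)) * B) := by
          intro k
          have hmeas : MeasurableSet (D k) :=
            measurableSet_ball.diff measurableSet_ball
          calc ∫⁻ z in D k, ENNReal.ofReal ((1-‖z‖) ^ lam) ∂volume
              ≤ ∫⁻ _ in D k, ENNReal.ofReal (((2:ℝ)⁻¹ ^ (k+1)) ^ lam) ∂volume := by
                apply setLIntegral_mono' hmeas
                intro z hz
                apply ENNReal.ofReal_le_ofReal
                have h1 : ‖z‖ < r (k+1) := mem_ball_zero_iff.mp hz.1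
                have h2 : (2:ℝ)⁻¹ ^ (k+1) ≤ 1 - ‖z‖ := by
                  simp only [hr] at h1; linarith
                exact Real.rpow_le_rpow_of_nonpos (hhalf (k+1)) h2 h0.le
            _ = ENNReal.ofReal (((2:ℝ)⁻¹ ^ (k+1)) ^ lam) * volume (D k) :=
                setLIntegral_const _ _
            _ ≤ _ := mul_le_mul_right (hvolD k) _
        set q : ℝ := (2:ℝ)⁻¹ ^ (1 + lam) with hq
        have hq0 : 0 ≤ q := Real.rpow_nonneg (by norm_num) _
        have hq1 : q < 1 := Real.rpow_lt_one (by norm_num) (by norm_num) (by linarith)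
        have hterm : ∀ k : ℕ, ENNReal.ofReal (((2:ℝ)⁻¹ ^ (k+1)) ^ lam) *
              (ENNReal.ofReal (d * (2:ℝ)⁻¹ ^ (k+1)) * B)
            = (ENNReal.ofReal d * B) * ENNReal.ofReal q ^ (k+1) := by
          intro k
          have e1 : ((2:ℝ)⁻¹ ^ (k+1)) ^ lam * ((2:ℝ)⁻¹ ^ (k+1)) = q ^ (k+1) := by
            rw [← Real.rpow_natCast (2:ℝ)⁻¹ (k+1)]
            rw [← Real.rpow_natCast q (k+1), hq]
            rw [← Real.rpow_mul (by norm_num : (0:ℝ) ≤ (2:ℝ)⁻¹)]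
            rw [← Real.rpow_mul (by norm_num : (0:ℝ) ≤ (2:ℝ)⁻¹)]
            rw [← Real.rpow_add (by norm_num : (0:ℝ) < (2:ℝ)⁻¹)]
            ring_nf
          have h2k : (0:ℝ) ≤ ((2:ℝ)⁻¹ ^ (k+1)) ^ lam := Real.rpow_nonneg (hhalf (k+1)).le _
          rw [ENNReal.ofReal_mul (Nat.cast_nonneg d : (0:ℝ) ≤ (d:ℝ))]
          rw [← ENNReal.ofReal_pow hq0, ← e1]
          rw [ENNReal.ofReal_mul h2k]
          ring
        calc ∫⁻ z in UB ι, ENNReal.ofReal ((1 - ‖z‖) ^ lam) ∂volume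
            ≤ ∫⁻ z in ⋃ k, D k, ENNReal.ofReal ((1 - ‖z‖) ^ lam) ∂volume :=
              lintegral_mono_set hcover
          _ ≤ ∑' k, ∫⁻ z in D k, ENNReal.ofReal ((1 - ‖z‖) ^ lam) ∂volume :=
              lintegral_iUnion_le _ _
          _ ≤ ∑' k, ENNReal.ofReal (((2:ℝ)⁻¹ ^ (k+1)) ^ lam) *
              (ENNReal.ofReal (d * (2:ℝ)⁻¹ ^ (k+1)) * B) := ENNReal.tsum_le_tsum hDk
          _ = (ENNReal.ofReal d * B) * ∑' k, ENNReal.ofReal q ^ (k+1) := by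
              rw [← ENNReal.tsum_mul_left]
              exact tsum_congr hterm
          _ < ⊤ := by
              apply ENNReal.mul_lt_top
              · exact ENNReal.mul_lt_top ENNReal.ofReal_lt_top hb
              · rw [ENNReal.tsum_geometric_add_one]
                apply ENNReal.mul_lt_top (ENNReal.ofReal_lt_top)
                exact ENNReal.inv_lt_top.2
                  (tsub_pos_iff_lt.mpr (ENNReal.ofReal_lt_one.mpr hq1))
    -- now conclude
    calc ∫⁻ z, wdens ι lam z ∂(volume.restrict (UB ι))
        ≤ ∫⁻ z, ENNReal.ofReal (normConst ι lam) *
            ENNReal.ofReal ((1 - ‖z‖) ^ lam) ∂(volume.restrict (UB ι)) := by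
          refine lintegral_mono_ae ?_
          filter_upwards [ae_restrict_mem measurableSet_ball] with z hz
          unfold wdens
          rw [← ENNReal.ofReal_mul hconst]
          apply ENNReal.ofReal_le_ofReal
          have h1 : ‖z‖ < 1 := mem_ball_zero_iff.mp hz
          have h2 : (0:ℝ) < 1 - ‖z‖ := by linarith
          have h3 : 1 - ‖z‖ ≤ 1 - ‖z‖ ^ 2 := by nlinarith [norm_nonneg z]
          have h4 : (1 - ‖z‖^2 : ℝ) ^ lam ≤ (1 - ‖z‖ : ℝ) ^ lam :=
            Real.rpow_le_rpow_of_nonpos h2 h3 h0.le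
          nlinarith
      _ = ENNReal.ofReal (normConst ι lam) *
            ∫⁻ z in UB ι, ENNReal.ofReal ((1 - ‖z‖) ^ lam) ∂volume :=
          lintegral_const_mul' _ _ ENNReal.ofReal_ne_top
      _ < ⊤ := ENNReal.mul_lt_top ENNReal.ofReal_lt_top hkey

end MeasureFacts

section IsoLemmas
variable {ι : Type*} [Fintype ι] [DecidableEq ι]

lemma uIso_mul_apply (A B : UG ι) (z : EC ι) : uIso (A * B) z = uIso A (uIso B z) := by
  unfold uIso
  rw [map_mul, map_mul]
  rfl

lemma uIso_one_apply (z : EC ι) : uIso (1 : UG ι) z = z := by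
  unfold uIso
  rw [map_one, map_one]
  rfl

lemma uIso_inv_apply_right (A : UG ι) (z : EC ι) : uIso A (uIso A⁻¹ z) = z := by
  rw [← uIso_mul_apply, mul_inv_cancel, uIso_one_apply]

lemma piL2_coeFn (lam : ℝ) (A : UG ι) (f : Lp ℂ 2 (mu ι lam)) :
    (piL2 lam A f : EC ι → ℂ) =ᵐ[mu ι lam] (f : EC ι → ℂ) ∘ ⇑(uIso A⁻¹) :=
  Lp.coeFn_compMeasurePreserving f (uIso_measurePreserving lam A⁻¹)

lemma piL2_comp (lam : ℝ) (A B : UG ι) (f : Lp ℂ 2 (mu ι lam)) :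
    piL2 lam A (piL2 lam B f) = piL2 lam (A * B) f := by
  apply Lp.ext
  have h1 := piL2_coeFn lam A (piL2 lam B f)
  have h2 := piL2_coeFn lam B f
  have h3 := (uIso_measurePreserving lam A⁻¹).quasiMeasurePreserving.ae_eq_comp h2
  have h4 := piL2_coeFn lam (A * B) f
  refine (h1.trans (h3.trans ?_)).trans h4.symm
  apply Filter.Eventually.of_forall
  intro z
  simp only [Function.comp_apply]
  rw [mul_inv_rev, uIso_mul_apply]

lemma piL2_one (lam : ℝ) (f : Lp ℂ 2 (mu ι lam)) : piL2 lam 1 f = f := by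
  apply Lp.ext
  refine (piL2_coeFn lam 1 f).trans ?_
  apply Filter.Eventually.of_forall
  intro z
  simp only [Function.comp_apply, inv_one]
  rw [uIso_one_apply]

lemma piL2_inv_cancel (lam : ℝ) (A : UG ι) (f : Lp ℂ 2 (mu ι lam)) :
    piL2 lam A⁻¹ (piL2 lam A f) = f := by
  rw [piL2_comp, inv_mul_cancel, piL2_one]

lemma bProj_piL2 (lam : ℝ) (A : UG ι) (x : Lp ℂ 2 (mu ι lam)) :
    ((bProj ι lam (piL2 lam A x)) : Lp ℂ 2 (mu ι lam)) =
      piL2 lam A ((bProj ι lam x : A2 ι lam) : Lp ℂ 2 (mu ι lam)) := by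
  apply Submodule.eq_starProjection_of_mem_of_inner_eq_zero (K := A2 ι lam)
  · exact piL2_mem_A2 lam A (bProj ι lam x).2
  · intro w hw
    have hw' : piL2 lam A⁻¹ w ∈ A2 ι lam := piL2_mem_A2 lam A⁻¹ hw
    have hrw : piL2 lam A (piL2 lam A⁻¹ w) = w := by
      rw [piL2_comp, mul_inv_cancel, piL2_one]
    rw [← (piL2 lam A).map_sub, ← hrw, (piL2 lam A).inner_map_map]
    exact Submodule.starProjection_inner_eq_zero x _ hw'

lemma piA2_coe (lam : ℝ) (A : UG ι) (f : A2 ι lam) :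
    ((piA2 lam A f : A2 ι lam) : Lp ℂ 2 (mu ι lam)) = piL2 lam A ↑f := rfl

lemma piA2_inv_cancel (lam : ℝ) (A : UG ι) (f : A2 ι lam) :
    piA2 lam A⁻¹ (piA2 lam A f) = f := by
  apply Subtype.ext
  rw [piA2_coe, piA2_coe, piL2_inv_cancel]

lemma mulSymb_coeFn {lam : ℝ} {a : EC ι → ℂ} (ha : MemLp a ⊤ (mu ι lam))
    (f : Lp ℂ 2 (mu ι lam)) :
    (mulSymb ha f : EC ι → ℂ) =ᵐ[mu ι lam] a • (f : EC ι → ℂ) :=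
  MemLp.coeFn_toLp ((Lp.memLp f).smul ha)

lemma mulSymb_congr {lam : ℝ} {a b : EC ι → ℂ} (ha : MemLp a ⊤ (mu ι lam))
    (hb : MemLp b ⊤ (mu ι lam)) (hab : a =ᵐ[mu ι lam] b) (f : Lp ℂ 2 (mu ι lam)) :
    mulSymb ha f = mulSymb hb f := by
  apply Lp.ext
  refine (mulSymb_coeFn ha f).trans (.trans ?_ (mulSymb_coeFn hb f).symm)
  filter_upwards [hab] with z hz
  simp only [Pi.smul_apply', hz]

lemma mulSymb_piL2 {lam : ℝ} {a : EC ι → ℂ} (ha : MemLp a ⊤ (mu ι lam)) (A : UG ι)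
    (f : Lp ℂ 2 (mu ι lam)) :
    mulSymb ha (piL2 lam A f) =
      piL2 lam A (mulSymb (ha.comp_measurePreserving (uIso_measurePreserving lam A)) f) := by
  set haA := ha.comp_measurePreserving (uIso_measurePreserving lam A)
  apply Lp.ext
  have h1 := mulSymb_coeFn ha (piL2 lam A f)
  have h2 := piL2_coeFn lam A f
  have h3 := piL2_coeFn lam A (mulSymb haA f)
  have h4 := (uIso_measurePreserving lam A⁻¹).quasiMeasurePreserving.ae_eq_comp
    (mulSymb_coeFn haA f)
  refine (h1.trans ?_).trans (h3.trans h4).symm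
  filter_upwards [h2] with z hz
  simp only [Pi.smul_apply', hz, Function.comp_apply, Pi.smul_apply, smul_eq_mul,
    Pi.mul_apply]
  rw [uIso_inv_apply_right]

lemma toeplitz_congr {lam : ℝ} {a b : EC ι → ℂ} (ha : MemLp a ⊤ (mu ι lam))
    (hb : MemLp b ⊤ (mu ι lam)) (hab : a =ᵐ[mu ι lam] b) : toeplitz ha = toeplitz hb := by
  refine ContinuousLinearMap.ext fun f => ?_
  show bProj ι lam (mulSymb ha ↑f) = bProj ι lam (mulSymb hb ↑f)
  rw [mulSymb_congr ha hb hab]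

lemma toeplitz_comp_piA2 {lam : ℝ} {a : EC ι → ℂ} (ha : MemLp a ⊤ (mu ι lam)) (A : UG ι) :
    (toeplitz ha).comp (piA2 lam A) =
      (piA2 lam A).comp (toeplitz (ha.comp_measurePreserving (uIso_measurePreserving lam A))) := by
  set haA := ha.comp_measurePreserving (uIso_measurePreserving lam A)
  refine ContinuousLinearMap.ext fun f => ?_
  apply Subtype.ext
  show ((bProj ι lam (mulSymb ha ↑(piA2 lam A f)) : A2 ι lam) : Lp ℂ 2 (mu ι lam)) =
    ((piA2 lam A (toeplitz haA f) : A2 ι lam) : Lp ℂ 2 (mu ι lam))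
  rw [piA2_coe, mulSymb_piL2 ha A, bProj_piL2, piA2_coe]
  rfl

end IsoLemmas

section Injectivity
variable {ι : Type*} [Fintype ι] [DecidableEq ι]

lemma norm_coord_le (z : EC ι) (i : ι) : ‖z i‖ ≤ ‖z‖ := by
  have h := EuclideanSpace.norm_eq z
  have h2 : ‖z i‖^2 ≤ ∑ j, ‖z j‖^2 :=
    Finset.single_le_sum (f := fun j => ‖z j‖^2) (fun j _ => by positivity) (Finset.mem_univ i)
  calc ‖z i‖ = Real.sqrt (‖z i‖^2) := (Real.sqrt_sq (norm_nonneg _)).symm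
    _ ≤ Real.sqrt (∑ j, ‖z j‖^2) := Real.sqrt_le_sqrt h2
    _ = ‖z‖ := by rw [h]

lemma monFun_norm_le {α : ι → ℕ} {z : EC ι} (hz : ‖z‖ ≤ 1) : ‖monFun α z‖ ≤ 1 := by
  unfold monFun
  rw [norm_prod]
  apply Finset.prod_le_one
  · intro i _; positivity
  · intro i _
    rw [norm_pow]
    exact pow_le_one₀ (norm_nonneg _) (le_trans (norm_coord_le z i) hz)

lemma monFun_continuous (α : ι → ℕ) : Continuous (monFun α) := by
  unfold monFun
  refine continuous_finset_prod _ (fun i _ => ?_)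
  exact ((EuclideanSpace.proj (𝕜 := ℂ) i).continuous.pow _)

lemma monFun_differentiable (α : ι → ℕ) : Differentiable ℂ (monFun α) := by
  have key : ∀ s : Finset ι, Differentiable ℂ (fun z : EC ι => ∏ i ∈ s, z i ^ α i) := by
    intro s
    classical
    induction s using Finset.induction with
    | empty => simpa using differentiable_const (1 : ℂ)
    | @insert j s hnot ih =>
      have hj : Differentiable ℂ (fun z : EC ι => z j ^ α j) :=
        ((EuclideanSpace.proj (𝕜 := ℂ) j).differentiable.pow _)
      have heq : (fun z : EC ι => ∏ i ∈ insert j s, z i ^ α i)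
          = fun z : EC ι => (z j ^ α j) * ∏ i ∈ s, z i ^ α i :=
        funext fun z => Finset.prod_insert hnot
      rw [heq]
      exact hj.mul ih
  exact key Finset.univ

lemma monFun_memLp2 (lam : ℝ) (hlam : -1 < lam) (α : ι → ℕ) :
    MemLp (monFun α) 2 (mu ι lam) := by
  haveI := mu_finite (ι := ι) lam hlam
  refine MemLp.of_bound (monFun_continuous α).aestronglyMeasurable 1 ?_
  filter_upwards [mu_ae_ball lam] with z hz
  exact monFun_norm_le (le_of_lt (mem_ball_zero_iff.mp hz))

/-- The monomial `z^α` as an element of the Bergman space. -/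
def monA2 (lam : ℝ) (hlam : -1 < lam) (α : ι → ℕ) : A2 ι lam :=
  ⟨(monFun_memLp2 lam hlam α).toLp (monFun α),
    Submodule.le_topologicalClosure (holo ι lam)
      ⟨monFun α, (monFun_differentiable α).differentiableOn,
        (monFun_memLp2 lam hlam α).coeFn_toLp⟩⟩

lemma monA2_coeFn (lam : ℝ) (hlam : -1 < lam) (α : ι → ℕ) :
    ((monA2 lam hlam α : A2 ι lam) : EC ι → ℂ) =ᵐ[mu ι lam] monFun α :=
  (monFun_memLp2 lam hlam α).coeFn_toLp

lemma inner_mulSymb {lam : ℝ} {c : EC ι → ℂ} (hc : MemLp c ⊤ (mu ι lam))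
    (f g : Lp ℂ 2 (mu ι lam)) :
    inner (𝕜 := ℂ) g (mulSymb hc f) =
      ∫ z, (starRingEnd ℂ) (g z) * (c z * f z) ∂(mu ι lam) := by
  rw [MeasureTheory.L2.inner_def]
  apply integral_congr_ae
  filter_upwards [mulSymb_coeFn hc f] with z hz
  rw [hz]
  simp only [RCLike.inner_apply, Pi.smul_apply', smul_eq_mul]
  ring

lemma toeplitz_zero_moments {lam : ℝ} {c : EC ι → ℂ} (hc : MemLp c ⊤ (mu ι lam))
    (h : toeplitz hc = 0) (f g : A2 ι lam) :
    ∫ z, (starRingEnd ℂ) ((g : EC ι → ℂ) z) * (c z * (f : EC ι → ℂ) z) ∂(mu ι lam) = 0 := by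
  have h1 : bProj ι lam (mulSymb hc ↑f) = 0 := ContinuousLinearMap.ext_iff.mp h f
  have h2 : (mulSymb hc (↑f : Lp ℂ 2 (mu ι lam))) ∈ (A2 ι lam)ᗮ :=
    Submodule.orthogonalProjectionOnto_eq_zero_iff.mp h1
  have h3 := (Submodule.mem_orthogonal _ _).mp h2 ↑g g.2
  rw [← inner_mulSymb hc]
  exact h3

/-- The set of "monomial pair" functions `z ↦ z^α conj(z)^β`. -/
def monPairSet (ι : Type*) [Fintype ι] [DecidableEq ι] : Set (EC ι → ℂ) :=
  {f | ∃ α β : ι → ℕ, f = fun z => monFun α z * (starRingEnd ℂ) (monFun β z)}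

/-- The linear span of the monomial pairs. -/
def monSpan (ι : Type*) [Fintype ι] [DecidableEq ι] : Submodule ℂ (EC ι → ℂ) :=
  Submodule.span ℂ (monPairSet ι)

lemma monFun_add (α α' : ι → ℕ) (z : EC ι) :
    monFun (α + α') z = monFun α z * monFun α' z := by
  unfold monFun
  rw [← Finset.prod_mul_distrib]
  refine Finset.prod_congr rfl (fun i _ => ?_)
  rw [Pi.add_apply, pow_add]

lemma monFun_zero_eq (z : EC ι) : monFun (0 : ι → ℕ) z = 1 := by
  unfold monFun; simp

lemma monFun_single (i : ι) (z : EC ι) : monFun (Pi.single i 1) z = z i := by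
  unfold monFun
  rw [Finset.prod_eq_single i (fun j _ hj => by rw [Pi.single_eq_of_ne hj, pow_zero])
    (fun h => absurd (Finset.mem_univ i) h)]
  rw [Pi.single_eq_same, pow_one]

lemma monPair_mul {f g : EC ι → ℂ} (hf : f ∈ monPairSet ι) (hg : g ∈ monPairSet ι) :
    f * g ∈ monPairSet ι := by
  obtain ⟨α, β, rfl⟩ := hf; obtain ⟨α', β', rfl⟩ := hg
  refine ⟨α + α', β + β', funext fun z => ?_⟩
  simp only [Pi.mul_apply]
  rw [monFun_add, monFun_add, map_mul]
  ring

lemma monSpan_mul : ∀ f ∈ monSpan ι, ∀ g ∈ monSpan ι, f * g ∈ monSpan ι := by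
  intro f hf
  induction hf using Submodule.span_induction with
  | mem x hx =>
    intro g hg
    induction hg using Submodule.span_induction with
    | mem y hy => exact Submodule.subset_span (monPair_mul hx hy)
    | zero => simpa using (monSpan ι).zero_mem
    | add y z hy hz ihy ihz => rw [mul_add]; exact add_mem ihy ihz
    | smul t y hy ihy => rw [mul_smul_comm]; exact Submodule.smul_mem _ t ihy
  | zero => intro g hg; simpa using (monSpan ι).zero_mem
  | add x y hx hy ihx ihy => intro g hg; rw [add_mul]; exact add_mem (ihx g hg) (ihy g hg)
  | smul t x hx ihx => intro g hg; rw [smul_mul_assoc]; exact Submodule.smul_mem _ t (ihx g hg)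

lemma monSpan_one : (1 : EC ι → ℂ) ∈ monSpan ι :=
  Submodule.subset_span ⟨0, 0, funext fun z => by
    rw [monFun_zero_eq, map_one, mul_one]; rfl⟩

lemma monSpan_star : ∀ f ∈ monSpan ι, (star f) ∈ monSpan ι := by
  intro f hf
  induction hf using Submodule.span_induction with
  | mem x hx =>
    obtain ⟨α, β, rfl⟩ := hx
    refine Submodule.subset_span ⟨β, α, funext fun z => ?_⟩
    simp only [Pi.star_apply, star_mul, Complex.star_def, Complex.conj_conj]
  | zero => simpa using (monSpan ι).zero_mem
  | add x y hx hy ihx ihy => rw [star_add]; exact add_mem ihx ihy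
  | smul t x hx ihx => rw [star_smul]; exact Submodule.smul_mem _ (star t) ihx

lemma monPair_span_integral (lam : ℝ) (hlam : -1 < lam) {c : EC ι → ℂ}
    (hc : MemLp c ⊤ (mu ι lam)) (h : toeplitz hc = 0) :
    ∀ f ∈ monSpan ι,
      Integrable (fun z => c z * f z) (mu ι lam) ∧ ∫ z, c z * f z ∂(mu ι lam) = 0 := by
  haveI := mu_finite (ι := ι) lam hlam
  have hcInt : Integrable c (mu ι lam) :=
    memLp_one_iff_integrable.mp (hc.mono_exponent le_top)
  intro f hf
  induction hf using Submodule.span_induction with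
  | mem f hf =>
    obtain ⟨α, β, rfl⟩ := hf
    have hb : ∀ᵐ z ∂(mu ι lam), ‖monFun α z * (starRingEnd ℂ) (monFun β z)‖ ≤ 1 := by
      filter_upwards [mu_ae_ball lam] with z hz
      have h1 : ‖z‖ ≤ 1 := (mem_ball_zero_iff.mp hz).le
      rw [norm_mul]
      have h2 : ‖(starRingEnd ℂ) (monFun β z)‖ = ‖monFun β z‖ := RCLike.norm_conj _
      rw [h2]
      exact mul_le_one₀ (monFun_norm_le h1) (norm_nonneg _) (monFun_norm_le h1)
    have hmeas : AEStronglyMeasurable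
        (fun z => monFun α z * (starRingEnd ℂ) (monFun β z)) (mu ι lam) :=
      ((monFun_continuous α).mul (continuous_star.comp (monFun_continuous β))).aestronglyMeasurable
    have hint : Integrable
        (fun z => (monFun α z * (starRingEnd ℂ) (monFun β z)) * c z) (mu ι lam) :=
      hcInt.bdd_mul hmeas hb
    constructor
    · exact hint.congr (Filter.Eventually.of_forall fun z => by ring_nf)
    · have hm := toeplitz_zero_moments hc h (monA2 lam hlam α) (monA2 lam hlam β)
      have he : ∫ z, (starRingEnd ℂ) (((monA2 lam hlam β : A2 ι lam) : EC ι → ℂ) z) *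
            (c z * ((monA2 lam hlam α : A2 ι lam) : EC ι → ℂ) z) ∂(mu ι lam)
          = ∫ z, c z * (monFun α z * (starRingEnd ℂ) (monFun β z)) ∂(mu ι lam) := by
        apply integral_congr_ae
        filter_upwards [monA2_coeFn lam hlam α, monA2_coeFn lam hlam β] with z h1 h2
        rw [h1, h2]; ring
      rw [← he]
      exact hm
  | zero =>
    constructor
    · exact (integrable_zero _ _ _).congr (Filter.Eventually.of_forall fun z => by simp)
    · simp
  | add x y hx hy ihx ihy =>
    constructor
    · exact (ihx.1.add ihy.1).congr (Filter.Eventually.of_forall fun z => by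
        simp [mul_add])
    · have hfe : (fun z => c z * (x + y) z) = fun z => c z * x z + c z * y z :=
        funext fun z => by simp [mul_add]
      rw [hfe, integral_add ihx.1 ihy.1, ihx.2, ihy.2, add_zero]
  | smul t x hx ihx =>
    constructor
    · exact (ihx.1.smul t).congr (Filter.Eventually.of_forall fun z => by
        simp [Pi.smul_apply, smul_eq_mul]; ring)
    · have hfe : (fun z => c z * (t • x) z) = fun z => t • (c z * x z) :=
        funext fun z => by simp [Pi.smul_apply, smul_eq_mul]; ring
      rw [hfe, integral_smul, ihx.2, smul_zero]

lemma toeplitz_zero_symbol (lam : ℝ) (hlam : -1 < lam) {c : EC ι → ℂ}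
    (hc : MemLp c ⊤ (mu ι lam)) (h : toeplitz hc = 0) : c =ᵐ[mu ι lam] 0 := by
  haveI := mu_finite (ι := ι) lam hlam
  have hcInt : Integrable c (mu ι lam) :=
    memLp_one_iff_integrable.mp (hc.mono_exponent le_top)
  have hspan := monPair_span_integral lam hlam hc h
  haveI : CompactSpace (Metric.closedBall (0 : EC ι) 1) :=
    isCompact_iff_compactSpace.mp (isCompact_closedBall _ _)
  -- the star subalgebra of restrictions of elements of `monSpan`
  let SA : StarSubalgebra ℂ C(Metric.closedBall (0 : EC ι) 1, ℂ) :=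
    { carrier := {φ | ∃ f ∈ monSpan ι, ∀ x : Metric.closedBall (0 : EC ι) 1, φ x = f x}
      mul_mem' := by
        rintro φ ψ ⟨f, hf, hφ⟩ ⟨g, hg, hψ⟩
        exact ⟨f * g, monSpan_mul f hf g hg, fun x => by
          simp [hφ x, hψ x]⟩
      add_mem' := by
        rintro φ ψ ⟨f, hf, hφ⟩ ⟨g, hg, hψ⟩
        exact ⟨f + g, add_mem hf hg, fun x => by simp [hφ x, hψ x]⟩
      algebraMap_mem' := fun t =>
        ⟨t • 1, Submodule.smul_mem _ t monSpan_one, fun x => by simp⟩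
      star_mem' := by
        rintro φ ⟨f, hf, hφ⟩
        exact ⟨star f, monSpan_star f hf, fun x => by simp [hφ x]⟩ }
  have hsep : SA.SeparatesPoints := by
    intro x y hxy
    have hne : (x : EC ι) ≠ y := fun hc => hxy (Subtype.ext hc)
    obtain ⟨i, hi⟩ : ∃ i, (x : EC ι) i ≠ (y : EC ι) i := by
      by_contra hcon
      push_neg at hcon
      exact hne (WithLp.ofLp_injective 2 (funext hcon))
    let φ : C(Metric.closedBall (0 : EC ι) 1, ℂ) :=
      ⟨fun x => (x : EC ι) i,
        ((EuclideanSpace.proj (𝕜 := ℂ) i).continuous.comp continuous_subtype_val)⟩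
    refine ⟨⇑φ, ⟨φ, ?_, rfl⟩, hi⟩
    refine ⟨fun z => monFun (Pi.single i 1) z * (starRingEnd ℂ) (monFun (0 : ι → ℕ) z),
      Submodule.subset_span ⟨Pi.single i 1, 0, rfl⟩, fun x => ?_⟩
    show φ x = monFun (Pi.single i 1) (x : EC ι) * (starRingEnd ℂ) (monFun 0 (x : EC ι))
    rw [monFun_single, monFun_zero_eq, map_one, mul_one]
    rfl
  have htop := ContinuousMap.starSubalgebra_topologicalClosure_eq_top_of_separatesPoints SA hsep
  have hdense : ∀ G : C(Metric.closedBall (0 : EC ι) 1, ℂ), ∀ ε > 0,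
      ∃ f ∈ monSpan ι, ∀ x : Metric.closedBall (0 : EC ι) 1, ‖G x - f x‖ ≤ ε := by
    intro G ε hε
    have hG : G ∈ SA.topologicalClosure := by rw [htop]; exact StarSubalgebra.mem_top
    have hG' : (G : C(Metric.closedBall (0 : EC ι) 1, ℂ)) ∈
        closure (SA : Set C(Metric.closedBall (0 : EC ι) 1, ℂ)) := hG
    obtain ⟨φ, hφ, hdist⟩ := Metric.mem_closure_iff.mp hG' ε hε
    obtain ⟨f, hf, hφf⟩ := hφ
    refine ⟨f, hf, fun x => ?_⟩
    calc ‖G x - f x‖ = dist (G x) (φ x) := by rw [hφf x, dist_eq_norm]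
      _ ≤ dist G φ := ContinuousMap.dist_apply_le_dist x
      _ ≤ ε := hdist.le
  have hae : ∀ᵐ z ∂(mu ι lam), c z = 0 := by
    apply ae_eq_zero_of_integral_contDiff_smul_eq_zero (hcInt.locallyIntegrable)
    intro g hg hgsupp
    set I := ∫ z, g z • c z ∂(mu ι lam) with hI
    set C := ∫ z, ‖c z‖ ∂(mu ι lam) with hC
    have hC0 : 0 ≤ C := integral_nonneg fun z => norm_nonneg _
    have hgc : Continuous fun z : EC ι => (g z : ℂ) :=
      Complex.continuous_ofReal.comp hg.continuous
    have hgbdd : Integrable (fun z => (g z : ℂ) * c z) (mu ι lam) := by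
      obtain ⟨M, hM⟩ := hgsupp.exists_bound_of_continuous hg.continuous
      refine hcInt.bdd_mul (c := M) hgc.aestronglyMeasurable
        (Filter.Eventually.of_forall fun z => ?_)
      simpa using hM z
    have key : ∀ ε > 0, ‖I‖ ≤ ε * C := by
      intro ε hε
      let G : C(Metric.closedBall (0 : EC ι) 1, ℂ) :=
        ⟨fun x => (g (x : EC ι) : ℂ), hgc.comp continuous_subtype_val⟩
      obtain ⟨f, hf, happrox⟩ := hdense G ε hε
      obtain ⟨hint_f, hzero_f⟩ := hspan f hf
      have hIeq : I = ∫ z, c z * ((g z : ℂ) - f z) ∂(mu ι lam) := by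
        have hsplit : ∫ z, c z * ((g z : ℂ) - f z) ∂(mu ι lam)
            = ∫ z, c z * (g z : ℂ) ∂(mu ι lam) - ∫ z, c z * f z ∂(mu ι lam) := by
          rw [← integral_sub (hgbdd.congr (Filter.Eventually.of_forall fun z =>
            mul_comm _ _)) hint_f]
          apply integral_congr_ae
          exact Filter.Eventually.of_forall fun z => by ring
        rw [hsplit, hzero_f, sub_zero, hI]
        apply integral_congr_ae
        refine Filter.Eventually.of_forall fun z => ?_
        show g z • c z = c z * (g z : ℂ)
        have hrs : g z • c z = (g z : ℂ) * c z := Complex.real_smul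
        rw [hrs]; ring
      rw [hIeq]
      calc ‖∫ z, c z * ((g z : ℂ) - f z) ∂(mu ι lam)‖
          ≤ ∫ z, ‖c z * ((g z : ℂ) - f z)‖ ∂(mu ι lam) := norm_integral_le_integral_norm _
        _ ≤ ∫ z, ‖c z‖ * ε ∂(mu ι lam) := by
            apply integral_mono_ae
            · have hi1 : Integrable (fun z => c z * (g z : ℂ)) (mu ι lam) :=
                hgbdd.congr (Filter.Eventually.of_forall fun z => mul_comm _ _)
              exact ((hi1.sub hint_f).norm).congr
                (Filter.Eventually.of_forall fun z =>
                  congrArg norm (mul_sub (c z) ((g z : ℂ)) (f z)).symm)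
            · exact hcInt.norm.mul_const ε
            · filter_upwards [mu_ae_ball lam] with z hz
              rw [norm_mul]
              apply mul_le_mul_of_nonneg_left _ (norm_nonneg _)
              have hzc : z ∈ Metric.closedBall (0 : EC ι) 1 := ball_subset_closedBall hz
              exact happrox ⟨z, hzc⟩
        _ = ε * C := by rw [integral_mul_const, hC, mul_comm]
    have hnorm0 : ‖I‖ ≤ 0 := by
      by_contra hcon
      push_neg at hcon
      have hk := key (‖I‖ / (2 * (C + 1))) (by positivity)
      have h1 : ‖I‖ / (2 * (C + 1)) * C < ‖I‖ := by
        rw [div_mul_eq_mul_div, div_lt_iff₀ (by positivity)]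
        nlinarith
      linarith
    exact norm_le_zero_iff.mp hnorm0
  filter_upwards [hae] with z hz
  simpa using hz

lemma toeplitz_injective (lam : ℝ) (hlam : -1 < lam) {a b : EC ι → ℂ}
    (ha : MemLp a ⊤ (mu ι lam)) (hb : MemLp b ⊤ (mu ι lam))
    (h : toeplitz ha = toeplitz hb) : a =ᵐ[mu ι lam] b := by
  have hcm : MemLp (a - b) ⊤ (mu ι lam) := ha.sub hb
  have hT : toeplitz hcm = 0 := by
    refine ContinuousLinearMap.ext fun f => ?_
    have hmm : mulSymb hcm (↑f : Lp ℂ 2 (mu ι lam)) = mulSymb ha ↑f - mulSymb hb ↑f := by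
      apply Lp.ext
      have h1 := mulSymb_coeFn hcm (↑f : Lp ℂ 2 (mu ι lam))
      have h2 := mulSymb_coeFn ha (↑f : Lp ℂ 2 (mu ι lam))
      have h3 := mulSymb_coeFn hb (↑f : Lp ℂ 2 (mu ι lam))
      have h4 := Lp.coeFn_sub (mulSymb ha (↑f : Lp ℂ 2 (mu ι lam)))
        (mulSymb hb (↑f : Lp ℂ 2 (mu ι lam)))
      filter_upwards [h1, h2, h3, h4] with z hz1 hz2 hz3 hz4
      rw [hz1, hz4, Pi.sub_apply, hz2, hz3]
      simp only [Pi.smul_apply', Pi.sub_apply, smul_eq_mul]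
      ring
    show bProj ι lam (mulSymb hcm ↑f) = 0
    rw [hmm, map_sub, sub_eq_zero]
    exact ContinuousLinearMap.ext_iff.mp h f
  have h0 := toeplitz_zero_symbol lam hlam hcm hT
  filter_upwards [h0] with z hz
  have hz2 : a z - b z = 0 := by simpa using hz
  exact sub_eq_zero.mp hz2

end Injectivity

/-- Corollary: `H`-invariant symbols and intertwining Toeplitz operators.
For a closed subgroup `H ≤ U(n)`, a symbol `a ∈ L^∞(𝔹^n)` and `λ > -1`, the following are
equivalent: (1) `a` is `H`-invariant (`a ∘ A = a` for all `A ∈ H`); (2) the Toeplitz operator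
`T_a^{(λ)}` intertwines `π_λ|_H` (`T_a^{(λ)} π_λ(A) = π_λ(A) T_a^{(λ)}` for all `A ∈ H`). -/
theorem toeplitz_intertwines_iff_invariant {n : ℕ} (lam : ℝ) (hlam : -1 < lam)
    (H : Subgroup (UG (Fin n))) (hH : IsClosed (H : Set (UG (Fin n))))
    (a : EC (Fin n) → ℂ) (ha : MemLp a ⊤ (mu (Fin n) lam)) :
    (∀ A ∈ H, (fun z => a (uIso A z)) =ᵐ[mu (Fin n) lam] a) ↔
      (∀ A ∈ H, (toeplitz ha).comp (piA2 lam A) = (piA2 lam A).comp (toeplitz ha)) := by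
  constructor
  · intro hinv A hA
    have haA := ha.comp_measurePreserving (uIso_measurePreserving lam A)
    rw [toeplitz_comp_piA2 ha A, toeplitz_congr haA ha (hinv A hA)]
  · intro hcomm A hA
    have haA := ha.comp_measurePreserving (uIso_measurePreserving lam A)
    have h1 : (piA2 lam A).comp (toeplitz haA) = (piA2 lam A).comp (toeplitz ha) := by
      rw [← toeplitz_comp_piA2 ha A]
      exact hcomm A hA
    have h2 : toeplitz haA = toeplitz ha := by
      refine ContinuousLinearMap.ext fun f => ?_
      have h3 : piA2 lam A ((toeplitz haA) f) = piA2 lam A ((toeplitz ha) f) :=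
        ContinuousLinearMap.ext_iff.mp h1 f
      have h4 := congrArg (piA2 lam A⁻¹) h3
      rwa [piA2_inv_cancel, piA2_inv_cancel] at h4
    exact toeplitz_injective lam hlam haA ha h2

end Bergman
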